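/- Let 𝒦 and 𝒵 be finite sets with 𝒦 nonempty, and let (K, Z) be jointly distributed random variables on 𝒦 × 𝒵 with joint pmf p. Then Σ_{z∈𝒵} p_Z(z)·max_{k∈𝒦} p_{K|Z}(k|z) ≥ 2^{−H(K|Z)}, where the sum is over z with p_Z(z) > 0. -/
import Mathlib


open scoped BigOperators Classical

noncomputable section

/-- for jointly distributed `(K, Z)` on finite sets (𝒦 nonempty)
with joint pmf `p`, `Σ_z p_Z(z)·max_k p_{K|Z}(k|z) ≥ 2^{−H(K|Z)}`, where
`H(K|Z) = −Σ_{k,z} p(k,z)·log₂ p_{K|Z}(k|z)`, so that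
`2^{−H(K|Z)} = 2^{Σ_{k,z} p(k,z)·log₂(p(k,z)/p_Z(z))}` (the sum on the left is
over `z` with `p_Z(z) > 0`). -/
theorem statement15 {𝒦 𝒵 : Type} [Fintype 𝒦] [Fintype 𝒵] [Nonempty 𝒦]
    (p : 𝒦 × 𝒵 → ℝ) (hp0 : ∀ x, 0 ≤ p x) (hp1 : ∑ x, p x = 1) :
    (2 : ℝ) ^ (∑ k, ∑ z, p (k, z) * Real.logb 2 (p (k, z) / (∑ k', p (k', z))))
      ≤ ∑ z, (if 0 < ∑ k', p (k', z)
          then (∑ k', p (k', z)) * (⨆ k, p (k, z) / ∑ k', p (k', z))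
          else 0) := by
  classical
  set pZ : 𝒵 → ℝ := fun z => ∑ k', p (k', z) with hpZdef
  have hpZ0 : ∀ z, 0 ≤ pZ z := fun z => Finset.sum_nonneg fun k _ => hp0 _
  have hple : ∀ k z, p (k, z) ≤ pZ z := fun k z =>
    Finset.single_le_sum (f := fun k' => p (k', z)) (fun k _ => hp0 _) (Finset.mem_univ k)
  set a : 𝒦 × 𝒵 → ℝ := fun x => p x / pZ x.2 with hadef
  have ha0 : ∀ x, 0 ≤ a x := fun x => div_nonneg (hp0 x) (hpZ0 _)
  -- rewrite exponent as a sum over the product type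
  have hexp : (∑ k, ∑ z, p (k, z) * Real.logb 2 (p (k, z) / pZ z))
      = ∑ x : 𝒦 × 𝒵, p x * Real.logb 2 (a x) := by
    rw [Fintype.sum_prod_type]
  -- 2 ^ exponent = product of a^p
  have hpow : (2 : ℝ) ^ (∑ x : 𝒦 × 𝒵, p x * Real.logb 2 (a x))
      = ∏ x : 𝒦 × 𝒵, a x ^ p x := by
    rw [Real.rpow_sum_of_pos (by norm_num : (0:ℝ) < 2)]
    refine Finset.prod_congr rfl fun x _ => ?_
    by_cases hpx : p x = 0
    · simp [hpx]
    · have hpx : 0 < p x := lt_of_le_of_ne (hp0 x) (Ne.symm hpx)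
      have hpZx : 0 < pZ x.2 := lt_of_lt_of_le hpx (by
        simpa using hple x.1 x.2)
      have hax : 0 < a x := div_pos hpx hpZx
      rw [mul_comm, Real.rpow_mul (by norm_num : (0:ℝ) ≤ 2),
        Real.rpow_logb (by norm_num) (by norm_num) hax]
  -- AM-GM
  have hAMGM : ∏ x : 𝒦 × 𝒵, a x ^ p x ≤ ∑ x : 𝒦 × 𝒵, p x * a x :=
    Real.geom_mean_le_arith_mean_weighted Finset.univ p a
      (fun i _ => hp0 i) hp1 (fun i _ => ha0 i)
  -- bound the arithmetic mean by the RHS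
  have hbound : ∑ x : 𝒦 × 𝒵, p x * a x
      ≤ ∑ z, (if 0 < pZ z then pZ z * (⨆ k, p (k, z) / pZ z) else 0) := by
    rw [Fintype.sum_prod_type_right]
    refine Finset.sum_le_sum fun z _ => ?_
    by_cases hz : 0 < pZ z
    · rw [if_pos hz]
      have hbd : BddAbove (Set.range fun k => p (k, z) / pZ z) :=
        Set.Finite.bddAbove (Set.finite_range _)
      calc ∑ k, p (k, z) * a (k, z)
          ≤ ∑ k, p (k, z) * (⨆ k', p (k', z) / pZ z) := by
            refine Finset.sum_le_sum fun k _ => ?_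
            exact mul_le_mul_of_nonneg_left (le_ciSup hbd k) (hp0 _)
        _ = pZ z * (⨆ k, p (k, z) / pZ z) := by
            rw [← Finset.sum_mul]
    · rw [if_neg hz]
      have hz0 : pZ z = 0 := le_antisymm (not_lt.mp hz) (hpZ0 z)
      have : ∀ k, p (k, z) = 0 := fun k =>
        le_antisymm (hz0 ▸ hple k z) (hp0 _)
      simp [this]
  calc (2 : ℝ) ^ (∑ k, ∑ z, p (k, z) * Real.logb 2 (p (k, z) / pZ z))
      = ∏ x : 𝒦 × 𝒵, a x ^ p x := by rw [hexp, hpow]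
    _ ≤ ∑ x : 𝒦 × 𝒵, p x * a x := hAMGM
    _ ≤ _ := hbound
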